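/- Let S and X be finite types, let μ : S → X → S and ν : S → X → X be the transition and output maps of a Mealy automaton, assume the automaton is invertible (for every s ∈ S the map ν s : X → X is a bijection), and let F : S × X → S × X be defined by F (s,x) = (μ s x, ν s x) (the helix graph is the functional graph of F); assume F is bijective. Then the following are equivalent: (a) for all s and x one has μ s x ≠ s (no loops) and ν s x ≠ x (no arrows of the form s →^{x|x} t), and F (F p) = p for all p (the helix graph consists of cycles of length two); (b) the automaton corresponds to a pairing matrix, i.e., there exists c : S × X → ℕ such that for all p q : S × X one has (p ≠ q ∧ c p = c q) ↔ F p = q, and c has no repeated values in any row or column (for all p ≠ q with p.1 = q.1 or p.2 = q.2 one has c p ≠ c q). -/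
import Mathlib


/-- A bireversible Mealy automaton (given by transition map `μ`, output map `ν`, with
each `ν s` a bijection and the helix map `F (s,x) = (μ s x, ν s x)` bijective)
corresponds to a pairing matrix if and only if it has no loops, no arrows of the form
`s →^{x|x} t`, and its helix graph consists of cycles of length two. -/
theorem bireversible_corresponds_to_pairing_iff
    {S X : Type*} [Finite S] [Finite X]
    (μ : S → X → S) (ν : S → X → X)
    (hinv : ∀ s : S, Function.Bijective (ν s))
    (F : S × X → S × X)
    (hF : ∀ p : S × X, F p = (μ p.1 p.2, ν p.1 p.2))
    (hFbij : Function.Bijective F) :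
    ((∀ (s : S) (x : X), μ s x ≠ s) ∧ (∀ (s : S) (x : X), ν s x ≠ x) ∧
        (∀ p : S × X, F (F p) = p)) ↔
      (∃ c : S × X → ℕ,
        (∀ p q : S × X, (p ≠ q ∧ c p = c q) ↔ F p = q) ∧
        (∀ p q : S × X, p ≠ q → (p.1 = q.1 ∨ p.2 = q.2) → c p ≠ c q)) := by
  constructor
  · rintro ⟨hμ, hν, hinvol⟩
    obtain ⟨e, he⟩ := exists_injective_nat (S × X)
    have hFne : ∀ p : S × X, F p ≠ p := by
      intro p h
      have := congrArg Prod.fst h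
      rw [hF] at this
      exact hμ p.1 p.2 this
    set c : S × X → ℕ := fun p => min (e p) (e (F p)) with hcdef
    have hmin : ∀ p q : S × X, p ≠ q → c p = c q → F p = q := by
      intro p q hpq hc
      simp only [hcdef] at hc
      have h1 := min_choice (e p) (e (F p))
      have h2 := min_choice (e q) (e (F q))
      rcases h1 with h1 | h1 <;> rcases h2 with h2 | h2 <;>
        rw [h1, h2] at hc <;> have heq := he hc
      · exact absurd heq hpq
      · rw [heq, hinvol]
      · exact heq
      · exact absurd (hFbij.1 heq) hpq
    have hsymm : ∀ p : S × X, c p = c (F p) := by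
      intro p
      simp only [hcdef, hinvol]
      exact min_comm _ _
    refine ⟨c, ?_, ?_⟩
    · intro p q
      constructor
      · rintro ⟨hpq, hc⟩
        exact hmin p q hpq hc
      · rintro rfl
        exact ⟨fun h => hFne p h.symm, hsymm p⟩
    · intro p q hpq hrc hc
      have hFeq := hmin p q hpq hc
      subst hFeq
      rw [hF] at hrc
      rcases hrc with h | h
      · exact hμ p.1 p.2 h.symm
      · exact hν p.1 p.2 h.symm
  · rintro ⟨c, hc, hrc⟩
    have hkey : ∀ p : S × X, p ≠ F p ∧ c p = c (F p) := fun p => (hc p (F p)).mpr rfl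
    refine ⟨?_, ?_, ?_⟩
    · intro s x h
      have h1 := hkey (s, x)
      exact hrc (s, x) (F (s, x)) h1.1 (Or.inl (by rw [hF]; exact h.symm)) h1.2
    · intro s x h
      have h1 := hkey (s, x)
      exact hrc (s, x) (F (s, x)) h1.1 (Or.inr (by rw [hF]; exact h.symm)) h1.2
    · intro p
      have h1 := hkey p
      exact (hc (F p) p).mp ⟨fun h => h1.1 h.symm, h1.2.symm⟩
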